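/- Let X_1,…,X_m and Y_1,…,Y_m be bases of 𝔥 that are dual with respect to Q_𝔥 (Q_𝔥(X_r,Y_s) = δ_{rs}), and for X ∈ 𝔥 set ãd(X) := (1/4) Σ_{i,j} ⟨[X,Z_i], Z_j⟩ Z_i·Z_j ∈ Cl(𝔪) (note [X,Z_i] ∈ 𝔪). Then the lifted Casimir element of 𝔥 satisfies C̃_𝔥 := −Σ_r ãd(X_r)·ãd(Y_r) = −(1/16) Σ_{j,k,l,p} Q_𝔥([Z_j,Z_k]_𝔥, [Z_l,Z_p]_𝔥) Z_j·Z_k·Z_l·Z_p. -/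
import Mathlib


open scoped BigOperators

/-- The quadratic form `v ↦ −⟨v,v⟩` on the subspace `𝔪`, built from a bilinear form on
the ambient space; the associated Clifford algebra satisfies
`v·w + w·v = −2⟨v,w⟩·1` for `v,w ∈ 𝔪`. -/
noncomputable def mQF {𝔤 : Type*} [AddCommGroup 𝔤] [Module ℝ 𝔤]
    (𝔪 : Submodule ℝ 𝔤) (B : LinearMap.BilinForm ℝ 𝔤) : QuadraticForm ℝ ↥𝔪 :=
  LinearMap.BilinMap.toQuadraticMap ((-B).compl₁₂ 𝔪.subtype 𝔪.subtype)

/-- The lift `ãd(W) = (1/4) Σ_{i,j} ⟨[W,Z_i],Z_j⟩ Z_i·Z_j ∈ Cl(𝔪)` of the isotropy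
representation of `W ∈ 𝔥`. -/
noncomputable def adTilde {𝔤 : Type*} [LieRing 𝔤] [LieAlgebra ℝ 𝔤]
    (𝔪 : Submodule ℝ 𝔤) (Q : LinearMap.BilinForm ℝ 𝔤)
    {n : ℕ} (Z : Fin n → 𝔤) (hZ𝔪 : ∀ i, Z i ∈ 𝔪) (W : 𝔤) :
    CliffordAlgebra (mQF 𝔪 Q) :=
  (1 / 4 : ℝ) • ∑ i, ∑ j, Q ⁅W, Z i⁆ (Z j) •
    (CliffordAlgebra.ι (mQF 𝔪 Q) ⟨Z i, hZ𝔪 i⟩ *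
      CliffordAlgebra.ι (mQF 𝔪 Q) ⟨Z j, hZ𝔪 j⟩)

/-- For dual bases `X_r, Y_r` of `𝔥` with respect to `Q_𝔥`, the lifted
Casimir element satisfies
`C̃_𝔥 = −Σ_r ãd(X_r)·ãd(Y_r)
     = −(1/16) Σ_{j,k,l,p} Q_𝔥([Z_j,Z_k]_𝔥,[Z_l,Z_p]_𝔥) Z_j·Z_k·Z_l·Z_p`. -/
theorem stmt11
    {𝔤 : Type*} [LieRing 𝔤] [LieAlgebra ℝ 𝔤] [FiniteDimensional ℝ 𝔤]
    (𝔥 𝔪 : Submodule ℝ 𝔤)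
    (p𝔥 p𝔪 : 𝔤 →ₗ[ℝ] 𝔤)
    (hsum : ∀ x, p𝔥 x + p𝔪 x = x)
    (hmem𝔥 : ∀ x, p𝔥 x ∈ 𝔥) (hmem𝔪 : ∀ x, p𝔪 x ∈ 𝔪)
    (hid𝔥 : ∀ x ∈ 𝔥, p𝔥 x = x) (hid𝔪 : ∀ x ∈ 𝔪, p𝔪 x = x)
    (hsub : ∀ x ∈ 𝔥, ∀ y ∈ 𝔥, ⁅x, y⁆ ∈ 𝔥)
    (hhm : ∀ x ∈ 𝔥, ∀ y ∈ 𝔪, ⁅x, y⁆ ∈ 𝔪)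
    (Q : LinearMap.BilinForm ℝ 𝔤)
    (hQsymm : ∀ x y, Q x y = Q y x)
    (hQinv : ∀ w u v : 𝔤, Q ⁅w, u⁆ v + Q u ⁅w, v⁆ = 0)
    (hQ𝔥𝔪 : ∀ x ∈ 𝔥, ∀ y ∈ 𝔪, Q x y = 0)
    (hQpos𝔪 : ∀ x ∈ 𝔪, x ≠ 0 → 0 < Q x x)
    (hQ𝔥nd : ∀ x ∈ 𝔥, (∀ y ∈ 𝔥, Q x y = 0) → x = 0)
    {n : ℕ} (Z : Fin n → 𝔤) (hZ𝔪 : ∀ i, Z i ∈ 𝔪)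
    (hZon : ∀ i j, Q (Z i) (Z j) = if i = j then 1 else 0)
    (hZspan : Submodule.span ℝ (Set.range Z) = 𝔪)
    {m : ℕ} (X Y : Fin m → 𝔤)
    (hX𝔥 : ∀ r, X r ∈ 𝔥) (hY𝔥 : ∀ r, Y r ∈ 𝔥)
    (hdual : ∀ r s, Q (X r) (Y s) = if r = s then 1 else 0)
    (hXspan : Submodule.span ℝ (Set.range X) = 𝔥)
    (hYspan : Submodule.span ℝ (Set.range Y) = 𝔥) :
    -∑ r, adTilde 𝔪 Q Z hZ𝔪 (X r) * adTilde 𝔪 Q Z hZ𝔪 (Y r) =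
      (-(1 / 16) : ℝ) • ∑ j, ∑ k, ∑ l, ∑ p,
        Q (p𝔥 ⁅Z j, Z k⁆) (p𝔥 ⁅Z l, Z p⁆) •
          (CliffordAlgebra.ι (mQF 𝔪 Q) ⟨Z j, hZ𝔪 j⟩ *
            CliffordAlgebra.ι (mQF 𝔪 Q) ⟨Z k, hZ𝔪 k⟩ *
            CliffordAlgebra.ι (mQF 𝔪 Q) ⟨Z l, hZ𝔪 l⟩ *
            CliffordAlgebra.ι (mQF 𝔪 Q) ⟨Z p, hZ𝔪 p⟩) := by
  classical
  set e : Fin n → CliffordAlgebra (mQF 𝔪 Q) :=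
    fun i => CliffordAlgebra.ι (mQF 𝔪 Q) ⟨Z i, hZ𝔪 i⟩ with he
  -- Step 1: invariance identity
  have key : ∀ W ∈ 𝔥, ∀ j k : Fin n, Q ⁅W, Z j⁆ (Z k) = Q W (p𝔥 ⁅Z j, Z k⁆) := by
    intro W hW j k
    have h1 := hQinv (Z j) W (Z k)
    have hneg : ⁅Z j, W⁆ = -⁅W, Z j⁆ := (lie_skew (Z j) W).symm ▸ rfl
    have h2 : Q W ⁅Z j, Z k⁆ = Q ⁅W, Z j⁆ (Z k) := by
      rw [hneg] at h1
      simp only [map_neg, LinearMap.neg_apply] at h1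
      linarith
    have h3 : Q W ⁅Z j, Z k⁆ = Q W (p𝔥 ⁅Z j, Z k⁆) + Q W (p𝔪 ⁅Z j, Z k⁆) := by
      conv_lhs => rw [← hsum ⁅Z j, Z k⁆]
      simp [map_add]
    rw [← h2, h3, hQ𝔥𝔪 W hW _ (hmem𝔪 _), add_zero]
  -- Step 2: dual-basis expansion
  have hrepr : ∀ a ∈ 𝔥, (∑ r, Q (X r) a • Y r) = a := by
    intro a ha
    set c := (∑ r, Q (X r) a • Y r) - a with hc
    have hcmem : c ∈ 𝔥 :=
      Submodule.sub_mem _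
        (Submodule.sum_mem _ fun r _ => Submodule.smul_mem _ _ (hY𝔥 r)) ha
    have hz : ∀ y ∈ 𝔥, Q c y = 0 := by
      have hker : 𝔥 ≤ LinearMap.ker (Q c) := by
        rw [← hXspan, Submodule.span_le]
        rintro _ ⟨s, rfl⟩
        simp only [SetLike.mem_coe, LinearMap.mem_ker]
        have hYX : ∀ r, Q (Y r) (X s) = if r = s then 1 else 0 := by
          intro r; rw [hQsymm, hdual]; simp [eq_comm]
        simp only [hc, map_sub, map_sum, map_smul, LinearMap.sub_apply,
          LinearMap.sum_apply, LinearMap.smul_apply, smul_eq_mul, hYX,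
          mul_ite, mul_one, mul_zero, Finset.sum_ite_eq', Finset.mem_univ,
          if_true]
        rw [hQsymm a (X s)]; ring
      intro y hy
      exact LinearMap.mem_ker.mp (hker hy)
    have : c = 0 := hQ𝔥nd c hcmem hz
    have := sub_eq_zero.mp this
    exact this
  have hsumQ : ∀ a ∈ 𝔥, ∀ b : 𝔤, ∑ r, Q (X r) a * Q (Y r) b = Q a b := by
    intro a ha b
    calc ∑ r, Q (X r) a * Q (Y r) b = Q (∑ r, Q (X r) a • Y r) b := by
          simp [map_sum, LinearMap.sum_apply, map_smul, LinearMap.smul_apply,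
            smul_eq_mul]
      _ = Q a b := by rw [hrepr a ha]
  have scal : ∀ j k l p : Fin n,
      ∑ r, Q ⁅X r, Z j⁆ (Z k) * Q ⁅Y r, Z l⁆ (Z p)
        = Q (p𝔥 ⁅Z j, Z k⁆) (p𝔥 ⁅Z l, Z p⁆) := by
    intro j k l p
    have h : ∀ r : Fin m, Q ⁅X r, Z j⁆ (Z k) * Q ⁅Y r, Z l⁆ (Z p)
        = Q (X r) (p𝔥 ⁅Z j, Z k⁆) * Q (Y r) (p𝔥 ⁅Z l, Z p⁆) := fun r => by
      rw [key (X r) (hX𝔥 r), key (Y r) (hY𝔥 r)]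
    rw [Finset.sum_congr rfl fun r _ => h r]
    exact hsumQ _ (hmem𝔥 _) _
  -- Step 3: expand the Clifford product
  have expand : ∀ r, adTilde 𝔪 Q Z hZ𝔪 (X r) * adTilde 𝔪 Q Z hZ𝔪 (Y r)
      = (1 / 16 : ℝ) • ∑ j, ∑ k, ∑ l, ∑ p,
          (Q ⁅X r, Z j⁆ (Z k) * Q ⁅Y r, Z l⁆ (Z p)) •
            (e j * e k * e l * e p) := by
    intro r
    show ((1 / 4 : ℝ) • ∑ i, ∑ j, Q ⁅X r, Z i⁆ (Z j) • (e i * e j)) *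
        ((1 / 4 : ℝ) • ∑ i, ∑ j, Q ⁅Y r, Z i⁆ (Z j) • (e i * e j)) = _
    rw [smul_mul_smul_comm]
    norm_num
    congr 1
    rw [Finset.sum_mul]
    refine Finset.sum_congr rfl fun j _ => ?_
    rw [Finset.sum_mul]
    refine Finset.sum_congr rfl fun k _ => ?_
    rw [Finset.mul_sum]
    refine Finset.sum_congr rfl fun l _ => ?_
    rw [Finset.mul_sum]
    refine Finset.sum_congr rfl fun p _ => ?_
    rw [smul_mul_smul_comm, ← mul_assoc (e j * e k) (e l) (e p)]
  have main : (∑ r, adTilde 𝔪 Q Z hZ𝔪 (X r) * adTilde 𝔪 Q Z hZ𝔪 (Y r))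
      = (1 / 16 : ℝ) • ∑ j, ∑ k, ∑ l, ∑ p,
          Q (p𝔥 ⁅Z j, Z k⁆) (p𝔥 ⁅Z l, Z p⁆) • (e j * e k * e l * e p) := by
    simp only [expand]
    rw [← Finset.smul_sum]
    congr 1
    rw [Finset.sum_comm]
    refine Finset.sum_congr rfl fun j _ => ?_
    rw [Finset.sum_comm]
    refine Finset.sum_congr rfl fun k _ => ?_
    rw [Finset.sum_comm]
    refine Finset.sum_congr rfl fun l _ => ?_
    rw [Finset.sum_comm]
    refine Finset.sum_congr rfl fun p _ => ?_
    rw [← Finset.sum_smul, scal j k l p]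
  rw [main, ← neg_smul]
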